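/- arXiv:1712.10234 — 9 statements merged into one kernel-verified Lean document; each statement's English description precedes it below -/
import Mathlib

section
/- Let N_L, N_R ∈ ℕ, let a ∈ ℝ^{N_L+1}, let A = diag(a) ∈ ℝ^{(N_L+1)×(N_L+1)}, and let B ∈ ℝ^{(N_L+1)×(N_R+1)} be an arbitrary matrix. Let M_L ∈ ℝ^{(N_L+1)×(N_L+1)} and M_R ∈ ℝ^{(N_R+1)×(N_R+1)} be diagonal matrices and let P_{R2L} ∈ ℝ^{(N_L+1)×(N_R+1)}, P_{L2R} ∈ ℝ^{(N_R+1)×(N_L+1)} satisfy the M-compatibility condition P_{R2L}ᵀ M_L = M_R P_{L2R}. Then ⟨a, 𝔼(P_{R2L} Bᵀ)⟩_{M_L} = ⟨𝟙^R, 𝔼(P_{L2R} A B)⟩_{M_R}, where 𝟙^R ∈ ℝ^{N_R+1} is the vector of all ones. -/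
open Matrix BigOperators

/-- Discrete inner product `⟨a, b⟩_M := aᵀ M b`. -/
noncomputable def dip {n : ℕ} (M : Matrix (Fin n) (Fin n) ℝ) (a b : Fin n → ℝ) : ℝ :=
  a ⬝ᵥ M.mulVec b

/-- Lemma 3 of the paper: for `M`-compatible projection operators,
`⟨a, 𝔼(P_{R2L} Bᵀ)⟩_{M_L} = ⟨𝟙^R, 𝔼(P_{L2R} A B)⟩_{M_R}` with `A = diag(a)`. -/
theorem projection_inner_product_lemma
    (NL NR : ℕ)
    (a : Fin (NL + 1) → ℝ)
    (ωL : Fin (NL + 1) → ℝ) (ωR : Fin (NR + 1) → ℝ)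
    (B : Matrix (Fin (NL + 1)) (Fin (NR + 1)) ℝ)
    (PR2L : Matrix (Fin (NL + 1)) (Fin (NR + 1)) ℝ)
    (PL2R : Matrix (Fin (NR + 1)) (Fin (NL + 1)) ℝ)
    (hcompat : PR2L.transpose * Matrix.diagonal ωL = Matrix.diagonal ωR * PL2R) :
    dip (Matrix.diagonal ωL) a ((PR2L * B.transpose).diag)
      = dip (Matrix.diagonal ωR) (fun _ => 1)
          ((PL2R * Matrix.diagonal a * B).diag) := by
  have hent : ∀ (j : Fin (NR + 1)) (i : Fin (NL + 1)),
      PR2L i j * ωL i = ωR j * PL2R j i := by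
    intro j i
    have := congrFun (congrFun hcompat j) i
    simpa [Matrix.mul_apply, Matrix.transpose_apply, Matrix.diagonal_apply,
      Finset.sum_ite_eq, Finset.sum_ite_eq'] using this
  simp only [dip, dotProduct, Matrix.mulVec_diagonal, Matrix.diag_apply,
    Matrix.mul_apply, Matrix.transpose_apply, Matrix.diagonal_apply, one_mul,
    Finset.mul_sum, Finset.sum_mul]
  rw [Finset.sum_comm]
  refine Finset.sum_congr rfl fun j _ => ?_
  refine Finset.sum_congr rfl fun i _ => ?_
  have h := hent j i
  rw [Finset.sum_eq_single i (fun k _ hk => by simp [hk]) (by simp)]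
  simp only [if_true]
  linear_combination a i * B i j * h
end

section
/- Let N_L, N_R ∈ ℕ, let M_L ∈ ℝ^{(N_L+1)×(N_L+1)} and M_R ∈ ℝ^{(N_R+1)×(N_R+1)} be diagonal matrices, and let P_{R2L} ∈ ℝ^{(N_L+1)×(N_R+1)}, P_{L2R} ∈ ℝ^{(N_R+1)×(N_L+1)} satisfy the M-compatibility condition P_{R2L}ᵀ M_L = M_R P_{L2R}. For any flux matrix F ∈ ℝ^{(N_L+1)×(N_R+1)}, define the projected interface fluxes F^L := 𝔼(P_{R2L} Fᵀ) ∈ ℝ^{N_L+1} and F^R := 𝔼(P_{L2R} F) ∈ ℝ^{N_R+1}. Then the interface contribution to the primary quantities vanishes: ⟨𝟙^R, F^R⟩_{M_R} − ⟨𝟙^L, F^L⟩_{M_L} = 0, where 𝟙^L, 𝟙^R are the all-ones vectors in ℝ^{N_L+1} and ℝ^{N_R+1}. -/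
open Matrix BigOperators

/-- Primary conservation at a p-nonconforming interface (Theorem 1, conservation part):
`⟨𝟙^R, F^R⟩_{M_R} − ⟨𝟙^L, F^L⟩_{M_L} = 0` for the projected interface fluxes
`F^L = 𝔼(P_{R2L} Fᵀ)` and `F^R = 𝔼(P_{L2R} F)`. -/
theorem primary_conservation_p_refinement
    (NL NR : ℕ)
    (ωL : Fin (NL + 1) → ℝ) (ωR : Fin (NR + 1) → ℝ)
    (PR2L : Matrix (Fin (NL + 1)) (Fin (NR + 1)) ℝ)
    (PL2R : Matrix (Fin (NR + 1)) (Fin (NL + 1)) ℝ)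
    (hcompat : PR2L.transpose * Matrix.diagonal ωL = Matrix.diagonal ωR * PL2R)
    (F : Matrix (Fin (NL + 1)) (Fin (NR + 1)) ℝ) :
    dip (Matrix.diagonal ωR) (fun _ => 1) ((PL2R * F).diag)
      - dip (Matrix.diagonal ωL) (fun _ => 1) ((PR2L * F.transpose).diag) = 0 := by
  have h : ∀ i j, PR2L i j * ωL i = ωR j * PL2R j i := by
    intro i j
    have := congrFun (congrFun hcompat j) i
    simpa [Matrix.mul_diagonal, Matrix.diagonal_mul, Matrix.transpose_apply] using this
  have key : (∑ j, ωR j * (PL2R * F).diag j)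
      = ∑ i, ωL i * (PR2L * F.transpose).diag i := by
    simp only [Matrix.diag, Matrix.mul_apply, Matrix.transpose_apply, Finset.mul_sum]
    rw [Finset.sum_comm]
    refine Finset.sum_congr rfl fun i _ => Finset.sum_congr rfl fun j _ => ?_
    linear_combination (-F i j) * h i j
  simp only [dip, dotProduct, Matrix.mulVec_diagonal, one_mul]
  rw [key, sub_self]
end

section
/- Let N_L, N_R, M ∈ ℕ with M ≥ 1, let M_L ∈ ℝ^{(N_L+1)×(N_L+1)} and M_R ∈ ℝ^{(N_R+1)×(N_R+1)} be diagonal matrices, and let P_{R2L} ∈ ℝ^{(N_L+1)×(N_R+1)}, P_{L2R} ∈ ℝ^{(N_R+1)×(N_L+1)} satisfy P_{R2L}ᵀ M_L = M_R P_{L2R} and be exact on constants: P_{R2L} 𝟙^R = 𝟙^L and P_{L2R} 𝟙^L = 𝟙^R. For each q ∈ {1,…,M} let V^{q,L} ∈ ℝ^{N_L+1}, V^{q,R} ∈ ℝ^{N_R+1}, let Ψ^L ∈ ℝ^{N_L+1}, Ψ^R ∈ ℝ^{N_R+1}, and let F^q ∈ ℝ^{(N_L+1)×(N_R+1)} be matrices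 satisfying the entropy-conservation condition ∑_{q=1}^M (V^{q,R}_j − V^{q,L}_i) F^q_{ij} = Ψ^R_j − Ψ^L_i for all i ∈ {0,…,N_L}, j ∈ {0,…,N_R}. Define F^{q,L} := 𝔼(P_{R2L} (F^q)ᵀ) and F^{q,R} := 𝔼(P_{L2R} F^q). Then the interface entropy contribution vanishes: ∑_{q=1}^M ⟨V^{q,R}, F^{q,R}⟩_{M_R} − ⟨𝟙^R, Ψ^R⟩_{M_R} − ∑_{q=1}^M ⟨V^{q,L}, F^{q,L}⟩_{M_L} + ⟨𝟙^L, Ψ^L⟩_{M_L} = 0. -/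
open Matrix BigOperators

private lemma sum3_rotate {α β γ : Type*} [Fintype α] [Fintype β] [Fintype γ]
    (f : α → β → γ → ℝ) :
    ∑ a, ∑ b, ∑ c, f a b c = ∑ b, ∑ c, ∑ a, f a b c := by
  rw [Finset.sum_comm]
  exact Finset.sum_congr rfl fun b _ => Finset.sum_comm

private lemma sum3_reverse {α β γ : Type*} [Fintype α] [Fintype β] [Fintype γ]
    (f : α → β → γ → ℝ) :
    ∑ a, ∑ b, ∑ c, f a b c = ∑ c, ∑ b, ∑ a, f a b c := by
  rw [show (∑ a, ∑ b, ∑ c, f a b c) = ∑ a, ∑ c, ∑ b, f a b c from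
    Finset.sum_congr rfl fun a _ => Finset.sum_comm]
  rw [sum3_rotate]

/-- Entropy conservation at a p-nonconforming interface (Theorem 1, entropy part):
with `M`-compatible projections exact on constants and an entropy conservative
two-point flux, the interface entropy contribution vanishes. -/
theorem entropy_conservation_p_refinement
    (NL NR M : ℕ) (hM : 1 ≤ M)
    (ωL : Fin (NL + 1) → ℝ) (ωR : Fin (NR + 1) → ℝ)
    (PR2L : Matrix (Fin (NL + 1)) (Fin (NR + 1)) ℝ)
    (PL2R : Matrix (Fin (NR + 1)) (Fin (NL + 1)) ℝ)
    (hcompat : PR2L.transpose * Matrix.diagonal ωL = Matrix.diagonal ωR * PL2R)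
    (hconstR : PR2L.mulVec (fun _ => 1) = fun _ => 1)
    (hconstL : PL2R.mulVec (fun _ => 1) = fun _ => 1)
    (VL : Fin M → Fin (NL + 1) → ℝ) (VR : Fin M → Fin (NR + 1) → ℝ)
    (ΨL : Fin (NL + 1) → ℝ) (ΨR : Fin (NR + 1) → ℝ)
    (F : Fin M → Matrix (Fin (NL + 1)) (Fin (NR + 1)) ℝ)
    (hEC : ∀ (i : Fin (NL + 1)) (j : Fin (NR + 1)),
      ∑ q, (VR q j - VL q i) * F q i j = ΨR j - ΨL i) :
    (∑ q, dip (Matrix.diagonal ωR) (VR q) ((PL2R * F q).diag))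
      - dip (Matrix.diagonal ωR) (fun _ => 1) ΨR
      - (∑ q, dip (Matrix.diagonal ωL) (VL q) ((PR2L * (F q).transpose).diag))
      + dip (Matrix.diagonal ωL) (fun _ => 1) ΨL = 0 := by
  have key : ∀ (i : Fin (NL + 1)) (j : Fin (NR + 1)),
      PR2L i j * ωL i = ωR j * PL2R j i := by
    intro i j
    have := congrFun (congrFun hcompat j) i
    simpa [Matrix.mul_diagonal, Matrix.diagonal_mul, Matrix.transpose_apply] using this
  have hR1 : ∀ j, ∑ i, PL2R j i = 1 := by
    intro j
    have := congrFun hconstL j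
    simpa [Matrix.mulVec, dotProduct] using this
  have hL1 : ∀ i, ∑ j, PR2L i j = 1 := by
    intro i
    have := congrFun hconstR i
    simpa [Matrix.mulVec, dotProduct] using this
  -- expand all dips
  have e1 : (∑ q, dip (Matrix.diagonal ωR) (VR q) ((PL2R * F q).diag))
      = ∑ j, ∑ i, ∑ q, (ωR j * PL2R j i) * (VR q j * F q i j) := by
    simp only [dip, dotProduct, Matrix.mulVec_diagonal, Matrix.diag, Matrix.mul_apply,
      Finset.mul_sum]
    rw [sum3_rotate]
    exact Finset.sum_congr rfl fun j _ => Finset.sum_congr rfl fun i _ =>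
      Finset.sum_congr rfl fun q _ => by ring
  have e3 : (∑ q, dip (Matrix.diagonal ωL) (VL q) ((PR2L * (F q).transpose).diag))
      = ∑ j, ∑ i, ∑ q, (ωR j * PL2R j i) * (VL q i * F q i j) := by
    simp only [dip, dotProduct, Matrix.mulVec_diagonal, Matrix.diag, Matrix.mul_apply,
      Matrix.transpose_apply, Finset.mul_sum]
    rw [sum3_reverse]
    refine Finset.sum_congr rfl fun j _ => Finset.sum_congr rfl fun i _ =>
      Finset.sum_congr rfl fun q _ => ?_
    rw [← key i j]; ring
  have e13 : (∑ q, dip (Matrix.diagonal ωR) (VR q) ((PL2R * F q).diag))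
      - (∑ q, dip (Matrix.diagonal ωL) (VL q) ((PR2L * (F q).transpose).diag))
      = ∑ j, ∑ i, (ωR j * PL2R j i) * (ΨR j - ΨL i) := by
    rw [e1, e3, ← Finset.sum_sub_distrib]
    refine Finset.sum_congr rfl fun j _ => ?_
    rw [← Finset.sum_sub_distrib]
    refine Finset.sum_congr rfl fun i _ => ?_
    rw [← Finset.sum_sub_distrib, ← hEC i j, Finset.mul_sum]
    exact Finset.sum_congr rfl fun q _ => by ring
  have e2 : dip (Matrix.diagonal ωR) (fun _ => 1) ΨR
      - dip (Matrix.diagonal ωL) (fun _ => 1) ΨL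
      = ∑ j, ∑ i, (ωR j * PL2R j i) * (ΨR j - ΨL i) := by
    have h2 : ∑ j, ∑ i, (ωR j * PL2R j i) * ΨR j = ∑ j, ωR j * ΨR j := by
      refine Finset.sum_congr rfl fun j _ => ?_
      rw [← Finset.sum_mul]
      have : (∑ i, ωR j * PL2R j i) = ωR j := by
        rw [← Finset.mul_sum, hR1 j, mul_one]
      rw [this]
    have h3 : ∑ j, ∑ i, (ωR j * PL2R j i) * ΨL i = ∑ i, ωL i * ΨL i := by
      rw [Finset.sum_comm]
      refine Finset.sum_congr rfl fun i _ => ?_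
      have : ∀ j, (ωR j * PL2R j i) * ΨL i = PR2L i j * (ωL i * ΨL i) := by
        intro j; rw [← key i j]; ring
      rw [Finset.sum_congr rfl fun j _ => this j, ← Finset.sum_mul, hL1 i, one_mul]
    have expand : ∑ j, ∑ i, (ωR j * PL2R j i) * (ΨR j - ΨL i)
        = (∑ j, ∑ i, (ωR j * PL2R j i) * ΨR j) - ∑ j, ∑ i, (ωR j * PL2R j i) * ΨL i := by
      rw [← Finset.sum_sub_distrib]
      refine Finset.sum_congr rfl fun j _ => ?_
      rw [← Finset.sum_sub_distrib]
      exact Finset.sum_congr rfl fun i _ => by ring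
    rw [expand, h2, h3]
    simp [dip, dotProduct, Matrix.mulVec_diagonal]
  linarith [e13, e2]
end

section
/- Let N_L, N_R ∈ ℕ, let Δ_L, Δ_R > 0 be real numbers, let a ∈ ℝ^{N_L+1}, A = diag(a), and let B ∈ ℝ^{(N_L+1)×(N_R+1)} be arbitrary. Let M_L ∈ ℝ^{(N_L+1)×(N_L+1)} and M_R ∈ ℝ^{(N_R+1)×(N_R+1)} be diagonal matrices and let P_{R2L} ∈ ℝ^{(N_L+1)×(N_R+1)}, P_{L2R} ∈ ℝ^{(N_R+1)×(N_L+1)} satisfy the scaled compatibility condition Δ_L P_{R2L}ᵀ M_L = Δ_R M_R P_{L2R}. Then Δ_L ⟨a, 𝔼(P_{R2L} Bᵀ)⟩_{M_L} = Δ_R ⟨𝟙^R, 𝔼(P_{L2R} A B)⟩_{M_R}. -/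
open Matrix BigOperators

/-- Scaled version of the key inner-product lemma (used for h-refinement,
Corollary 1): under `Δ_L P_{R2L}ᵀ M_L = Δ_R M_R P_{L2R}` one has
`Δ_L ⟨a, 𝔼(P_{R2L} Bᵀ)⟩_{M_L} = Δ_R ⟨𝟙^R, 𝔼(P_{L2R} A B)⟩_{M_R}`. -/
theorem scaled_projection_inner_product_lemma
    (NL NR : ℕ) (ΔL ΔR : ℝ) (hΔL : 0 < ΔL) (hΔR : 0 < ΔR)
    (a : Fin (NL + 1) → ℝ)
    (ωL : Fin (NL + 1) → ℝ) (ωR : Fin (NR + 1) → ℝ)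
    (B : Matrix (Fin (NL + 1)) (Fin (NR + 1)) ℝ)
    (PR2L : Matrix (Fin (NL + 1)) (Fin (NR + 1)) ℝ)
    (PL2R : Matrix (Fin (NR + 1)) (Fin (NL + 1)) ℝ)
    (hcompat : ΔL • (PR2L.transpose * Matrix.diagonal ωL)
      = ΔR • (Matrix.diagonal ωR * PL2R)) :
    ΔL * dip (Matrix.diagonal ωL) a ((PR2L * B.transpose).diag)
      = ΔR * dip (Matrix.diagonal ωR) (fun _ => 1)
          ((PL2R * Matrix.diagonal a * B).diag) := by
  have key : ∀ (i : Fin (NL + 1)) (j : Fin (NR + 1)),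
      ΔL * (PR2L i j * ωL i) = ΔR * (ωR j * PL2R j i) := by
    intro i j
    have := congrFun (congrFun hcompat j) i
    simpa [Matrix.mul_apply, Matrix.transpose_apply, Matrix.diagonal,
      Finset.mul_sum, mul_comm, mul_assoc] using this
  have lhs : ΔL * dip (Matrix.diagonal ωL) a ((PR2L * B.transpose).diag)
      = ∑ i, ∑ j, (ΔL * (PR2L i j * ωL i)) * (a i * B i j) := by
    simp only [dip, dotProduct, Matrix.mulVec_diagonal, Matrix.diag,
      Matrix.mul_apply, Matrix.transpose_apply, Finset.mul_sum]
    refine Finset.sum_congr rfl fun i _ => Finset.sum_congr rfl fun j _ => by ring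
  have rhs : ΔR * dip (Matrix.diagonal ωR) (fun _ => 1)
        ((PL2R * Matrix.diagonal a * B).diag)
      = ∑ j, ∑ i, (ΔR * (ωR j * PL2R j i)) * (a i * B i j) := by
    simp only [dip, dotProduct, Matrix.mulVec_diagonal, Matrix.diag,
      Matrix.mul_apply, Matrix.mul_diagonal, Finset.mul_sum, Finset.sum_mul]
    refine Finset.sum_congr rfl fun j _ => Finset.sum_congr rfl fun i _ => ?_
    simp [Matrix.diagonal_apply, mul_ite, ite_mul, mul_zero, zero_mul]
    ring
  rw [lhs, rhs, Finset.sum_comm]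
  exact Finset.sum_congr rfl fun j _ => Finset.sum_congr rfl fun i _ => by
    rw [key i j]
end

section
/- Let E ≥ 1, and for i = 1,…,E let N_{L_i} ∈ ℕ and Δ_{L_i} > 0; let N_R ∈ ℕ and Δ_R > 0. Let M_{L_i} ∈ ℝ^{(N_{L_i}+1)×(N_{L_i}+1)} and M_R ∈ ℝ^{(N_R+1)×(N_R+1)} be diagonal matrices, and let P_{R2L_i} ∈ ℝ^{(N_{L_i}+1)×(N_R+1)}, P_{L_i2R} ∈ ℝ^{(N_R+1)×(N_{L_i}+1)} satisfy Δ_{L_i} P_{R2L_i}ᵀ M_{L_i} = Δ_R M_R P_{L_i2R} for each i. For arbitrary flux matrices F_i ∈ ℝ^{(N_{L_i}+1)×(N_R+1)} define F^{L_i} := 𝔼(P_{R2L_i} F_iᵀ) and F^R := ∑_{i=1}^E 𝔼(P_{L_i2R} F_i). Then primary conservation holds at the non-conforming interface: Δ_R ⟨𝟙^R, F^R⟩_{M_R} − ∑_{i=1}^E Δ_{L_i} ⟨𝟙^{L_i}, F^{L_i}⟩_{M_{L_i}} = 0. -/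
open Matrix BigOperators

lemma dip_diag_one {n : ℕ} (w : Fin n → ℝ) (v : Fin n → ℝ) :
    dip (Matrix.diagonal w) (fun _ => 1) v = ∑ k, w k * v k := by
  simp [dip, dotProduct, Matrix.mulVec, Matrix.diagonal_apply, ite_mul, zero_mul,
    Finset.sum_ite_eq, Finset.mul_sum]

/-- Primary conservation at an h-nonconforming interface (Corollary 1,
conservation part): `E` left elements of heights `Δ_{L_i}` coupled to one right
element of height `Δ_R`. -/
theorem primary_conservation_h_refinement
    (E : ℕ) (hE : 1 ≤ E) (NR : ℕ) (ΔR : ℝ) (hΔR : 0 < ΔR)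
    (NL : Fin E → ℕ) (ΔL : Fin E → ℝ) (hΔL : ∀ i, 0 < ΔL i)
    (ωL : (i : Fin E) → Fin (NL i + 1) → ℝ) (ωR : Fin (NR + 1) → ℝ)
    (PR2L : (i : Fin E) → Matrix (Fin (NL i + 1)) (Fin (NR + 1)) ℝ)
    (PL2R : (i : Fin E) → Matrix (Fin (NR + 1)) (Fin (NL i + 1)) ℝ)
    (hcompat : ∀ i, ΔL i • ((PR2L i).transpose * Matrix.diagonal (ωL i))
      = ΔR • (Matrix.diagonal ωR * PL2R i))
    (F : (i : Fin E) → Matrix (Fin (NL i + 1)) (Fin (NR + 1)) ℝ) :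
    ΔR * dip (Matrix.diagonal ωR) (fun _ => 1) (∑ i, (PL2R i * F i).diag)
      - ∑ i, ΔL i * dip (Matrix.diagonal (ωL i)) (fun _ => 1)
          ((PR2L i * (F i).transpose).diag) = 0 := by
  have key : ∀ (i : Fin E) (k : Fin (NR + 1)) (j : Fin (NL i + 1)),
      ΔL i * (PR2L i j k * ωL i j) = ΔR * (ωR k * PL2R i k j) := by
    intro i k j
    have := congrFun (congrFun (hcompat i) k) j
    simpa [Matrix.mul_apply, Matrix.diagonal, Matrix.transpose_apply,
      Finset.mul_sum, mul_comm, mul_left_comm] using this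
  rw [sub_eq_zero]
  simp only [dip_diag_one, Matrix.diag, Matrix.mul_apply, Matrix.transpose_apply,
    Finset.sum_apply, Finset.mul_sum]
  rw [Finset.sum_comm]
  apply Finset.sum_congr rfl
  intro i _
  rw [Finset.sum_comm]
  apply Finset.sum_congr rfl
  intro k _
  apply Finset.sum_congr rfl
  intro j _
  linear_combination (-(F i k j)) * key i j k
end

section
/- Under the setting of the h-refined interface (E left elements with heights Δ_{L_i} coupled to one right element of height Δ_R, diagonal matrices M_{L_i}, M_R, projections satisfying Δ_{L_i} P_{R2L_i}ᵀ M_{L_i} = Δ_R M_R P_{L_i2R} and P_{R2L_i} 𝟙^R = 𝟙^{L_i}), let λ ∈ ℝ, let F^q_i ∈ ℝ^{(N_{L_i}+1)×(N_R+1)} be arbitrary flux matrices, and let V^{q,L_i} ∈ ℝ^{N_{L_i}+1}, V^{q,R} ∈ ℝ^{N_R+1} be arbitrary vectors. Define the dissipative fluxes F^{ES,q,L_i} := 𝔼(P_{R2L_i}(F^q_i)ᵀ) − (λ/2)(P_{R2L_i} V^{q,R} − V^{q,L_i}) and F^{ES,q,R} := ∑_{i=1}^E 𝔼(P_{L_i2R}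 F^q_i) − (λ/2) ∑_{i=1}^E P_{L_i2R}(P_{R2L_i} V^{q,R} − V^{q,L_i}). Then primary conservation still holds: Δ_R ⟨𝟙^R, F^{ES,q,R}⟩_{M_R} − ∑_{i=1}^E Δ_{L_i} ⟨𝟙^{L_i}, F^{ES,q,L_i}⟩_{M_{L_i}} = 0 for each q. -/
open Matrix BigOperators

/-- Primary conservation with interface dissipation (Theorem 2, conservation
part): the dissipative entropy stable fluxes still conserve the primary
quantities at an h-nonconforming interface. -/
theorem primary_conservation_with_dissipation
    (E : ℕ) (hE : 1 ≤ E) (M : ℕ) (hM : 1 ≤ M)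
    (NR : ℕ) (ΔR : ℝ) (hΔR : 0 < ΔR)
    (NL : Fin E → ℕ) (ΔL : Fin E → ℝ) (hΔL : ∀ i, 0 < ΔL i)
    (ωL : (i : Fin E) → Fin (NL i + 1) → ℝ) (ωR : Fin (NR + 1) → ℝ)
    (PR2L : (i : Fin E) → Matrix (Fin (NL i + 1)) (Fin (NR + 1)) ℝ)
    (PL2R : (i : Fin E) → Matrix (Fin (NR + 1)) (Fin (NL i + 1)) ℝ)
    (hcompat : ∀ i, ΔL i • ((PR2L i).transpose * Matrix.diagonal (ωL i))
      = ΔR • (Matrix.diagonal ωR * PL2R i))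
    (hconstR : ∀ i, (PR2L i).mulVec (fun _ => 1) = fun _ => 1)
    (lam : ℝ)
    (VL : Fin M → (i : Fin E) → Fin (NL i + 1) → ℝ)
    (VR : Fin M → Fin (NR + 1) → ℝ)
    (F : Fin M → (i : Fin E) → Matrix (Fin (NL i + 1)) (Fin (NR + 1)) ℝ) :
    ∀ q : Fin M,
      ΔR * dip (Matrix.diagonal ωR) (fun _ => 1)
          ((∑ i, (PL2R i * F q i).diag)
            - (lam / 2) • ∑ i, (PL2R i).mulVec ((PR2L i).mulVec (VR q) - VL q i))
        - ∑ i, ΔL i * dip (Matrix.diagonal (ωL i)) (fun _ => 1)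
            ((PR2L i * (F q i).transpose).diag
              - (lam / 2) • ((PR2L i).mulVec (VR q) - VL q i)) = 0 := by
  intro q
  have key : ∀ (i : Fin E) (j : Fin (NL i + 1)) (k : Fin (NR + 1)),
      ΔL i * (PR2L i j k * ωL i j) = ΔR * (ωR k * PL2R i k j) := by
    intro i j k
    have h := congrFun (congrFun (hcompat i) k) j
    simpa [Matrix.smul_apply, Matrix.mul_diagonal, Matrix.diagonal_mul,
      Matrix.transpose_apply, smul_eq_mul] using h
  have hone : ∀ (i : Fin E) (j : Fin (NL i + 1)), ∑ k, PR2L i j k = 1 := by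
    intro i j
    have h := congrFun (hconstR i) j
    simpa [Matrix.mulVec, dotProduct] using h
  -- adjoint-type identity
  have adj : ∀ (i : Fin E) (w : Fin (NL i + 1) → ℝ),
      ΔR * ∑ k, ωR k * ((PL2R i).mulVec w k) = ΔL i * ∑ j, ωL i j * w j := by
    intro i w
    simp only [Matrix.mulVec, dotProduct]
    rw [Finset.mul_sum, Finset.mul_sum]
    have lhs_eq : ∀ k, ΔR * (ωR k * ∑ j, PL2R i k j * w j)
        = ∑ j, ΔR * (ωR k * PL2R i k j) * w j := by
      intro k
      rw [Finset.mul_sum, Finset.mul_sum]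
      exact Finset.sum_congr rfl fun j _ => by ring
    have rhs_eq : ∀ j, ΔL i * (ωL i j * w j)
        = ∑ k, ΔR * (ωR k * PL2R i k j) * w j := by
      intro j
      calc ΔL i * (ωL i j * w j)
          = (∑ k, PR2L i j k) * (ΔL i * (ωL i j * w j)) := by rw [hone i j]; ring
        _ = ∑ k, ΔL i * (PR2L i j k * ωL i j) * w j := by
            rw [Finset.sum_mul]; exact Finset.sum_congr rfl fun k _ => by ring
        _ = ∑ k, ΔR * (ωR k * PL2R i k j) * w j := by
            exact Finset.sum_congr rfl fun k _ => by rw [key i j k]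
    simp only [lhs_eq, rhs_eq]
    exact Finset.sum_comm
  -- flux part
  have flux : ∀ (i : Fin E),
      ΔR * ∑ k, ωR k * (PL2R i * F q i).diag k
        = ΔL i * ∑ j, ωL i j * (PR2L i * (F q i).transpose).diag j := by
    intro i
    simp only [Matrix.diag, Matrix.mul_apply, Matrix.transpose_apply]
    rw [Finset.mul_sum, Finset.mul_sum]
    have lhs_eq : ∀ k, ΔR * (ωR k * ∑ j, PL2R i k j * F q i j k)
        = ∑ j, ΔR * (ωR k * PL2R i k j) * F q i j k := by
      intro k
      rw [Finset.mul_sum, Finset.mul_sum]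
      exact Finset.sum_congr rfl fun j _ => by ring
    have rhs_eq : ∀ j, ΔL i * (ωL i j * ∑ k, PR2L i j k * F q i j k)
        = ∑ k, ΔR * (ωR k * PL2R i k j) * F q i j k := by
      intro j
      rw [Finset.mul_sum, Finset.mul_sum]
      refine Finset.sum_congr rfl fun k _ => ?_
      rw [← key i j k]; ring
    simp only [lhs_eq, rhs_eq]
    exact Finset.sum_comm
  -- per-element identity
  have main : ∀ i : Fin E,
      ΔR * dip (Matrix.diagonal ωR) (fun _ => 1)
          ((PL2R i * F q i).diag
            - (lam / 2) • (PL2R i).mulVec ((PR2L i).mulVec (VR q) - VL q i))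
        = ΔL i * dip (Matrix.diagonal (ωL i)) (fun _ => 1)
            ((PR2L i * (F q i).transpose).diag
              - (lam / 2) • ((PR2L i).mulVec (VR q) - VL q i)) := by
    intro i
    simp only [dip, dotProduct, Matrix.mulVec_diagonal, one_mul, Pi.sub_apply,
      Pi.smul_apply, smul_eq_mul]
    have expand : ∀ (n : ℕ) (ω v w : Fin n → ℝ) (c : ℝ),
        ∑ k, ω k * (v k - lam / 2 * w k)
          = (∑ k, ω k * v k) - (lam / 2) * ∑ k, ω k * w k := by
      intro n ω v w c
      rw [Finset.mul_sum, ← Finset.sum_sub_distrib]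
      exact Finset.sum_congr rfl fun k _ => by ring
    rw [expand _ _ _ _ 0, expand _ _ _ _ 0, mul_sub, mul_sub, flux i]
    have := adj i ((PR2L i).mulVec (VR q) - VL q i)
    rw [show ΔR * (lam / 2 * ∑ k, ωR k *
          (PL2R i).mulVec ((PR2L i).mulVec (VR q) - VL q i) k)
        = lam / 2 * (ΔR * ∑ k, ωR k *
          (PL2R i).mulVec ((PR2L i).mulVec (VR q) - VL q i) k) by ring,
      this]
    simp only [Pi.sub_apply]
    ring
  -- combine
  have split : ((∑ i, (PL2R i * F q i).diag)
        - (lam / 2) • ∑ i, (PL2R i).mulVec ((PR2L i).mulVec (VR q) - VL q i))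
      = ∑ i, ((PL2R i * F q i).diag
        - (lam / 2) • (PL2R i).mulVec ((PR2L i).mulVec (VR q) - VL q i)) := by
    rw [Finset.sum_sub_distrib, Finset.smul_sum]
  rw [split]
  have diplin : ∀ (n : ℕ) (Mat : Matrix (Fin n) (Fin n) ℝ) (a : Fin n → ℝ)
      (f : Fin E → Fin n → ℝ),
      dip Mat a (∑ i, f i) = ∑ i, dip Mat a (f i) := by
    intro n Mat a f
    simp only [dip]
    have hmv : Mat.mulVec (∑ i, f i) = ∑ i, Mat.mulVec (f i) := by
      funext x
      simp only [Matrix.mulVec, dotProduct, Finset.sum_apply, Finset.mul_sum]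
      exact Finset.sum_comm
    rw [hmv]
    simp only [dotProduct, Finset.sum_apply, Finset.mul_sum]
    exact Finset.sum_comm
  rw [diplin, Finset.mul_sum, ← Finset.sum_sub_distrib]
  exact Finset.sum_eq_zero fun i _ => by rw [main i, sub_self]
end

section
/- Let N, M ∈ ℕ with M ≥ 1 and let Q ∈ ℝ^{(N+1)×(N+1)} satisfy Q + Qᵀ = B with B = diag(−1,0,…,0,1) and Q𝟙 = 0 (all row sums of Q vanish). Let F : {0,…,N} × {0,…,N} → ℝ^M be symmetric (F(i,m) = F(m,i)), let V : {0,…,N} → ℝ^M and Ψ : {0,…,N} → ℝ satisfy the entropy-conservation condition (V_i − V_m) · F(i,m) = Ψ_i − Ψ_m for all i, m. Then 2 ∑_{i=0}^N ∑_{m=0}^N Q_{im} V_i · F(i,m) = (V_N · F(N,N) − Ψ_N) − (V_0 · F(0,0) − Ψ_0). -/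
open Matrix BigOperators

/-- The SBP boundary matrix `B = diag(−1, 0, …, 0, 1)`. -/
noncomputable def boundaryMatrix (N : ℕ) : Matrix (Fin (N + 1)) (Fin (N + 1)) ℝ :=
  Matrix.diagonal (fun i =>
    (if i = Fin.last N then (1 : ℝ) else 0) + (if i = 0 then (-1 : ℝ) else 0))

/-- Entropy telescoping identity for a consistent SBP matrix (key entropy step
of Lemma 1, Appendix A): `2 ∑_{i,m} Q_{im} V_i · F(i,m)
= (V_N · F(N,N) − Ψ_N) − (V_0 · F(0,0) − Ψ_0)`. -/
theorem sbp_entropy_flux_telescoping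
    (N M : ℕ) (hM : 1 ≤ M)
    (Q : Matrix (Fin (N + 1)) (Fin (N + 1)) ℝ)
    (hSBP : Q + Q.transpose = boundaryMatrix N)
    (hconsistent : Q.mulVec (fun _ => 1) = 0)
    (F : Fin (N + 1) → Fin (N + 1) → Fin M → ℝ)
    (hsym : ∀ i m, F i m = F m i)
    (V : Fin (N + 1) → Fin M → ℝ)
    (Ψ : Fin (N + 1) → ℝ)
    (hEC : ∀ i m, (V i - V m) ⬝ᵥ F i m = Ψ i - Ψ m) :
    2 * ∑ i, ∑ m, Q i m * (V i ⬝ᵥ F i m)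
      = (V (Fin.last N) ⬝ᵥ F (Fin.last N) (Fin.last N) - Ψ (Fin.last N))
        - (V 0 ⬝ᵥ F 0 0 - Ψ 0) := by
  -- row sums of Q vanish
  have hrow : ∀ i, ∑ m, Q i m = 0 := by
    intro i
    have := congrFun hconsistent i
    simpa [Matrix.mulVec, dotProduct] using this
  -- entries of B
  have hB : ∀ i m, Q i m + Q m i = (boundaryMatrix N) i m := by
    intro i m
    have := congrFun (congrFun hSBP i) m
    simpa [Matrix.transpose_apply] using this
  -- column sums of Q equal diagonal of B
  have hcol : ∀ m, ∑ i, Q i m = (boundaryMatrix N) m m := by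
    intro m
    have h1 : ∑ i, Q i m = ∑ i, ((boundaryMatrix N) i m - Q m i) := by
      refine Finset.sum_congr rfl fun i _ => ?_
      have := hB i m; linarith
    rw [h1, Finset.sum_sub_distrib, hrow m, sub_zero]
    rw [Finset.sum_eq_single m]
    · intro b _ hb
      simp [boundaryMatrix, Matrix.diagonal_apply_ne _ hb]
    · intro h; exact absurd (Finset.mem_univ m) h
  -- main splitting: 2 Q V·F = Q (V_i+V_m)·F + Q (V_i - V_m)·F
  have hsplit : 2 * ∑ i, ∑ m, Q i m * (V i ⬝ᵥ F i m)
      = (∑ i, ∑ m, Q i m * ((V i + V m) ⬝ᵥ F i m))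
        + (∑ i, ∑ m, Q i m * ((V i - V m) ⬝ᵥ F i m)) := by
    rw [Finset.mul_sum, ← Finset.sum_add_distrib]
    refine Finset.sum_congr rfl fun i _ => ?_
    rw [Finset.mul_sum, ← Finset.sum_add_distrib]
    refine Finset.sum_congr rfl fun m _ => ?_
    rw [add_dotProduct, sub_dotProduct]; ring
  -- symmetric part
  have hsymm : (∑ i, ∑ m, Q i m * ((V i + V m) ⬝ᵥ F i m))
      = V (Fin.last N) ⬝ᵥ F (Fin.last N) (Fin.last N) - V 0 ⬝ᵥ F 0 0 := by
    have h2 : (∑ i, ∑ m, Q i m * (V m ⬝ᵥ F i m))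
        = ∑ i, ∑ m, Q m i * (V i ⬝ᵥ F i m) := by
      rw [Finset.sum_comm]
      refine Finset.sum_congr rfl fun i _ => Finset.sum_congr rfl fun m _ => ?_
      rw [hsym m i]
    have h1 : (∑ i, ∑ m, Q i m * ((V i + V m) ⬝ᵥ F i m))
        = ∑ i, ∑ m, (boundaryMatrix N) i m * (V i ⬝ᵥ F i m) := by
      have : (∑ i, ∑ m, Q i m * ((V i + V m) ⬝ᵥ F i m))
          = (∑ i, ∑ m, Q i m * (V i ⬝ᵥ F i m))
            + (∑ i, ∑ m, Q i m * (V m ⬝ᵥ F i m)) := by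
        rw [← Finset.sum_add_distrib]
        refine Finset.sum_congr rfl fun i _ => ?_
        rw [← Finset.sum_add_distrib]
        refine Finset.sum_congr rfl fun m _ => ?_
        rw [add_dotProduct]; ring
      rw [this, h2, ← Finset.sum_add_distrib]
      refine Finset.sum_congr rfl fun i _ => ?_
      rw [← Finset.sum_add_distrib]
      refine Finset.sum_congr rfl fun m _ => ?_
      rw [← hB i m]; ring
    rw [h1]
    have hdiag : ∀ i : Fin (N + 1),
        (∑ m, (boundaryMatrix N) i m * (V i ⬝ᵥ F i m))
          = ((if i = Fin.last N then (1 : ℝ) else 0) + (if i = 0 then (-1 : ℝ) else 0))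
              * (V i ⬝ᵥ F i i) := by
      intro i
      rw [Finset.sum_eq_single i]
      · simp [boundaryMatrix]
      · intro b _ hb
        simp [boundaryMatrix, Matrix.diagonal_apply_ne _ (Ne.symm hb)]
      · intro h; exact absurd (Finset.mem_univ i) h
    simp only [hdiag]
    simp only [add_mul, Finset.sum_add_distrib, ite_mul, zero_mul, one_mul, neg_one_mul]
    rw [Finset.sum_ite_eq' Finset.univ (Fin.last N), Finset.sum_ite_eq' Finset.univ (0 : Fin (N+1))]
    simp [sub_eq_add_neg]
  -- antisymmetric part
  have hanti : (∑ i, ∑ m, Q i m * ((V i - V m) ⬝ᵥ F i m)) = -(Ψ (Fin.last N)) + Ψ 0 := by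
    have h1 : (∑ i, ∑ m, Q i m * ((V i - V m) ⬝ᵥ F i m))
        = (∑ i, ∑ m, Q i m * Ψ i) - (∑ i, ∑ m, Q i m * Ψ m) := by
      rw [← Finset.sum_sub_distrib]
      refine Finset.sum_congr rfl fun i _ => ?_
      rw [← Finset.sum_sub_distrib]
      refine Finset.sum_congr rfl fun m _ => ?_
      rw [hEC i m]; ring
    rw [h1]
    have h2 : (∑ i, ∑ m, Q i m * Ψ i) = 0 := by
      refine Finset.sum_eq_zero fun i _ => ?_
      rw [← Finset.sum_mul, hrow i, zero_mul]
    have h3 : (∑ i, ∑ m, Q i m * Ψ m)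
        = ∑ m, (boundaryMatrix N) m m * Ψ m := by
      rw [Finset.sum_comm]
      refine Finset.sum_congr rfl fun m _ => ?_
      rw [← Finset.sum_mul, hcol m]
    rw [h2, h3]
    have h4 : ∀ m : Fin (N + 1), (boundaryMatrix N) m m
        = (if m = Fin.last N then (1 : ℝ) else 0) + (if m = 0 then (-1 : ℝ) else 0) := by
      intro m; simp [boundaryMatrix]
    simp only [h4]
    simp only [add_mul, Finset.sum_add_distrib, ite_mul, zero_mul, one_mul, neg_one_mul]
    rw [Finset.sum_ite_eq' Finset.univ (Fin.last N), Finset.sum_ite_eq' Finset.univ (0 : Fin (N+1))]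
    simp; ring
  rw [hsplit, hsymm, hanti]; ring
end

section
/- Let N, M ∈ ℕ with M ≥ 1, let ω₀,…,ω_N ∈ ℝ, let J ∈ ℝ, and let Q ∈ ℝ^{(N+1)×(N+1)} satisfy Q + Qᵀ = B with B = diag(−1,0,…,0,1). Let F̃, G̃ : ℝ^M × ℝ^M → ℝ^M be symmetric (F̃(a,b) = F̃(b,a)) and consistent with physical fluxes f̃, g̃ : ℝ^M → ℝ^M (F̃(a,a) = f̃(a), G̃(a,a) = g̃(a)). Let U : {0,…,N}² → ℝ^M be nodal solution values and F*⁺, F*⁻, G*⁺, G*⁻ : {0,…,N} → ℝ^M be surface numerical fluxes. Suppose (U_t)_{ij} ∈ ℝ^M satisfies, for all i,j: J ω_i ω_j (U_t)_{ij} = −ω_j [2 ∑_{m=0}^N Q_{im} F̃(U_{ij}, U_{mj}) + δ_{iN}(F*⁺_j − f̃(U_{Nj})) − δ_{i0}(F*⁻_j − f̃(U_{0j}))] − ω_i [2 ∑_{m=0}^N Q_{jm} G̃(U_{ij}, U_{im}) + δ_{jN}(G*⁺_i − g̃(U_{iN})) − δ_{j0}(G*⁻_i − g̃(U_{i0}))].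 Then the total growth of each primary quantity reduces to surface terms: J ∑_{i,j=0}^N ω_i ω_j (U_t)_{ij} = − ∑_{j=0}^N ω_j (F*⁺_j − F*⁻_j) − ∑_{i=0}^N ω_i (G*⁺_i − G*⁻_i). -/
open Matrix BigOperators

lemma sum_boundary_weights {α : Type*} [AddCommGroup α] [Module ℝ α] (N : ℕ)
    (X : Fin (N + 1) → α) :
    ∑ i, ((if i = Fin.last N then (1 : ℝ) else 0) + (if i = 0 then (-1 : ℝ) else 0)) • X i
      = X (Fin.last N) - X 0 := by
  simp [add_smul, Finset.sum_add_distrib, ite_smul, sub_eq_add_neg]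

lemma key_volume {α : Type*} [AddCommGroup α] [Module ℝ α] (N : ℕ)
    (Q : Matrix (Fin (N + 1)) (Fin (N + 1)) ℝ)
    (hSBP : Q + Q.transpose = boundaryMatrix N)
    (F : α → α → α) (hsym : ∀ a b, F a b = F b a)
    (V : Fin (N + 1) → α) :
    ∑ i, (2 : ℝ) • ∑ m, Q i m • F (V i) (V m)
      = F (V (Fin.last N)) (V (Fin.last N)) - F (V 0) (V 0) := by
  have hswap : ∑ i, ∑ m, Q m i • F (V i) (V m) = ∑ i, ∑ m, Q i m • F (V i) (V m) := by
    rw [Finset.sum_comm]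
    exact Finset.sum_congr rfl fun i _ => Finset.sum_congr rfl fun m _ => by rw [hsym]
  have h1 : ∑ i, (2 : ℝ) • ∑ m, Q i m • F (V i) (V m)
      = ∑ i, ∑ m, ((Q + Q.transpose) i m) • F (V i) (V m) := by
    simp only [Matrix.add_apply, Matrix.transpose_apply, add_smul, Finset.sum_add_distrib,
      two_smul, hswap]
  rw [h1, hSBP]
  have h2 : ∀ i, ∑ m, (boundaryMatrix N) i m • F (V i) (V m)
      = ((if i = Fin.last N then (1 : ℝ) else 0) + (if i = 0 then (-1 : ℝ) else 0)) •
          F (V i) (V i) := by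
    intro i
    simp [boundaryMatrix, Matrix.diagonal_apply, ite_smul, Finset.sum_ite_eq]
  simp only [h2]
  exact sum_boundary_weights N fun i => F (V i) (V i)

lemma sum_ite_smul_one {α : Type*} [AddCommGroup α] [Module ℝ α] (N : ℕ)
    (k : Fin (N + 1)) (x : α) :
    ∑ i : Fin (N + 1), (if i = k then (1 : ℝ) else 0) • x = x := by
  simp [ite_smul]

/-- Lemma 1 of the paper, primary part: for the split-form DGSEM on one
element the total growth of the primary quantities reduces to surface terms. -/
theorem splitform_dgsem_primary_growth
    (N M : ℕ) (hM : 1 ≤ M)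
    (ω : Fin (N + 1) → ℝ) (J : ℝ)
    (Q : Matrix (Fin (N + 1)) (Fin (N + 1)) ℝ)
    (hSBP : Q + Q.transpose = boundaryMatrix N)
    (Ftil Gtil : (Fin M → ℝ) → (Fin M → ℝ) → (Fin M → ℝ))
    (ftil gtil : (Fin M → ℝ) → (Fin M → ℝ))
    (hFsym : ∀ a b, Ftil a b = Ftil b a)
    (hGsym : ∀ a b, Gtil a b = Gtil b a)
    (hFcons : ∀ a, Ftil a a = ftil a)
    (hGcons : ∀ a, Gtil a a = gtil a)
    (U Ut : Fin (N + 1) → Fin (N + 1) → (Fin M → ℝ))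
    (Fsp Fsm Gsp Gsm : Fin (N + 1) → (Fin M → ℝ))
    (hscheme : ∀ i j,
      (J * ω i * ω j) • Ut i j =
        -(ω j • ((2 : ℝ) • (∑ m, Q i m • Ftil (U i j) (U m j))
            + (if i = Fin.last N then (1 : ℝ) else 0) •
                (Fsp j - ftil (U (Fin.last N) j))
            - (if i = 0 then (1 : ℝ) else 0) • (Fsm j - ftil (U 0 j))))
        - ω i • ((2 : ℝ) • (∑ m, Q j m • Gtil (U i j) (U i m))
            + (if j = Fin.last N then (1 : ℝ) else 0) •
                (Gsp i - gtil (U i (Fin.last N)))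
            - (if j = 0 then (1 : ℝ) else 0) • (Gsm i - gtil (U i 0)))) :
    J • (∑ i, ∑ j, (ω i * ω j) • Ut i j)
      = -(∑ j, ω j • (Fsp j - Fsm j)) - ∑ i, ω i • (Gsp i - Gsm i) := by
  classical
  -- abbreviations
  set A : Fin (N + 1) → Fin (N + 1) → (Fin M → ℝ) := fun i j =>
    (2 : ℝ) • (∑ m, Q i m • Ftil (U i j) (U m j))
      + (if i = Fin.last N then (1 : ℝ) else 0) • (Fsp j - ftil (U (Fin.last N) j))
      - (if i = 0 then (1 : ℝ) else 0) • (Fsm j - ftil (U 0 j)) with hA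
  set Bt : Fin (N + 1) → Fin (N + 1) → (Fin M → ℝ) := fun i j =>
    (2 : ℝ) • (∑ m, Q j m • Gtil (U i j) (U i m))
      + (if j = Fin.last N then (1 : ℝ) else 0) • (Gsp i - gtil (U i (Fin.last N)))
      - (if j = 0 then (1 : ℝ) else 0) • (Gsm i - gtil (U i 0)) with hB
  have lhs_eq : J • (∑ i, ∑ j, (ω i * ω j) • Ut i j)
      = ∑ i, ∑ j, (-(ω j • A i j) - ω i • Bt i j) := by
    rw [Finset.smul_sum]
    refine Finset.sum_congr rfl fun i _ => ?_
    rw [Finset.smul_sum]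
    refine Finset.sum_congr rfl fun j _ => ?_
    rw [smul_smul, ← mul_assoc, hscheme i j]
  have hsumA : ∀ j, ∑ i, A i j = Fsp j - Fsm j := by
    intro j
    simp only [hA]
    rw [Finset.sum_sub_distrib, Finset.sum_add_distrib,
      key_volume N Q hSBP Ftil hFsym (fun m => U m j),
      sum_ite_smul_one, sum_ite_smul_one, hFcons, hFcons]
    abel
  have hsumB : ∀ i, ∑ j, Bt i j = Gsp i - Gsm i := by
    intro i
    simp only [hB]
    rw [Finset.sum_sub_distrib, Finset.sum_add_distrib,
      key_volume N Q hSBP Gtil hGsym (fun m => U i m),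
      sum_ite_smul_one, sum_ite_smul_one, hGcons, hGcons]
    abel
  rw [lhs_eq]
  have h1 : ∀ i, ∑ j, (-(ω j • A i j) - ω i • Bt i j)
      = (∑ j, -(ω j • A i j)) - ω i • (Gsp i - Gsm i) := by
    intro i
    rw [Finset.sum_sub_distrib, ← Finset.smul_sum, hsumB i]
  simp only [h1]
  rw [Finset.sum_sub_distrib, Finset.sum_comm]
  congr 1
  have h2 : ∀ j, ∑ i, -(ω j • A i j) = -(ω j • (Fsp j - Fsm j)) := by
    intro j
    rw [Finset.sum_neg_distrib, ← Finset.smul_sum, hsumA j]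
  simp only [h2]
  rw [Finset.sum_neg_distrib]
end

section
/- Let N, M ∈ ℕ with M ≥ 1, let ω₀,…,ω_N ∈ ℝ, let J ∈ ℝ, and let Q ∈ ℝ^{(N+1)×(N+1)} satisfy Q + Qᵀ = B with B = diag(−1,0,…,0,1) and Q𝟙 = 0. Let F̃, G̃ : ℝ^M × ℝ^M → ℝ^M be symmetric and consistent with f̃, g̃, let v : ℝ^M → ℝ^M and ψ^f, ψ^g : ℝ^M → ℝ satisfy the entropy-conservation conditions (v(a) − v(b)) · F̃(a,b) = ψ^f(a) − ψ^f(b) and (v(a) − v(b)) · G̃(a,b) = ψ^g(a) − ψ^g(b) for all a, b ∈ ℝ^M. Let U : {0,…,N}² → ℝ^M, let F*⁺, F*⁻, G*⁺, G*⁻ : {0,…,N} → ℝ^M, and suppose (U_t)_{ij} satisfies the split-form DGSEM scheme J ω_i ω_j (U_t)_{ij} = −ω_j [2 ∑_{m=0}^N Q_{im} F̃(U_{ij},U_{mj}) + δ_{iN}(F*⁺_j − f̃(U_{Nj})) − δ_{i0}(F*⁻_j − f̃(U_{0j}))] − ω_i [2 ∑_{m=0}^N Q_{jm} G̃(U_{ij},U_{im})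 + δ_{jN}(G*⁺_i − g̃(U_{iN})) − δ_{j0}(G*⁻_i − g̃(U_{i0}))]. Define (S_t)_{ij} := v(U_{ij}) · (U_t)_{ij}. Then J ∑_{i,j=0}^N ω_i ω_j (S_t)_{ij} = − ∑_{j=0}^N ω_j [(v(U_{Nj}) · F*⁺_j − ψ^f(U_{Nj})) − (v(U_{0j}) · F*⁻_j − ψ^f(U_{0j}))] − ∑_{i=0}^N ω_i [(v(U_{iN}) · G*⁺_i − ψ^g(U_{iN})) − (v(U_{i0}) · G*⁻_i − ψ^g(U_{i0}))]. -/
open Matrix BigOperators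

lemma dotProduct_finset_sum {M : ℕ} {ι : Type*} (s : Finset ι) (u : Fin M → ℝ)
    (w : ι → Fin M → ℝ) : u ⬝ᵥ (∑ i ∈ s, w i) = ∑ i ∈ s, u ⬝ᵥ w i := by
  simp only [dotProduct, Finset.sum_apply, Finset.mul_sum]
  exact Finset.sum_comm

lemma volume_sum {N M : ℕ} (Q : Matrix (Fin (N+1)) (Fin (N+1)) ℝ)
    (hSBP : Q + Q.transpose = boundaryMatrix N)
    (hQrow : ∀ i, ∑ m, Q i m = 0)
    (F : (Fin M → ℝ) → (Fin M → ℝ) → (Fin M → ℝ))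
    (f : (Fin M → ℝ) → (Fin M → ℝ))
    (hsym : ∀ a b, F a b = F b a) (hcons : ∀ a, F a a = f a)
    (v : (Fin M → ℝ) → (Fin M → ℝ)) (ψ : (Fin M → ℝ) → ℝ)
    (hEC : ∀ a b, (v a - v b) ⬝ᵥ F a b = ψ a - ψ b)
    (u : Fin (N+1) → (Fin M → ℝ)) :
    2 * ∑ i, ∑ m, Q i m * (v (u i) ⬝ᵥ F (u i) (u m))
      = (v (u (Fin.last N)) ⬝ᵥ f (u (Fin.last N)) - ψ (u (Fin.last N)))
        - (v (u 0) ⬝ᵥ f (u 0) - ψ (u 0)) := by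
  have hB : ∀ i m : Fin (N+1), Q i m + Q m i = boundaryMatrix N i m := by
    intro i m
    have := congrFun (congrFun hSBP i) m
    simpa [Matrix.add_apply, Matrix.transpose_apply] using this
  have hQcol : ∀ m : Fin (N+1), ∑ i, Q i m
      = (if m = Fin.last N then (1:ℝ) else 0) + (if m = 0 then (-1:ℝ) else 0) := by
    intro m
    have h1 : ∀ i, Q i m = boundaryMatrix N i m - Q m i := fun i => by
      have := hB i m; linarith
    calc ∑ i, Q i m = ∑ i, (boundaryMatrix N i m - Q m i) :=
          Finset.sum_congr rfl fun i _ => h1 i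
      _ = (∑ i, boundaryMatrix N i m) - ∑ i, Q m i := Finset.sum_sub_distrib _ _
      _ = _ := by
          rw [hQrow m, sub_zero]
          simp [boundaryMatrix, Matrix.diagonal_apply, Finset.sum_ite_eq']
  -- step 1: symmetrize
  have hsymm : 2 * ∑ i, ∑ m, Q i m * (v (u i) ⬝ᵥ F (u i) (u m))
      = ∑ i, ∑ m, (Q i m * (ψ (u i) - ψ (u m))
          + boundaryMatrix N i m * (v (u m) ⬝ᵥ F (u i) (u m))) := by
    have h2 : ∑ i, ∑ m, Q i m * (v (u i) ⬝ᵥ F (u i) (u m))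
        = ∑ i, ∑ m, Q m i * (v (u m) ⬝ᵥ F (u i) (u m)) := by
      rw [Finset.sum_comm]
      exact Finset.sum_congr rfl fun i _ => Finset.sum_congr rfl fun m _ => by rw [hsym]
    have hterm : ∀ i m : Fin (N+1),
        Q i m * (v (u i) ⬝ᵥ F (u i) (u m)) + Q m i * (v (u m) ⬝ᵥ F (u i) (u m))
          = Q i m * (ψ (u i) - ψ (u m)) + boundaryMatrix N i m * (v (u m) ⬝ᵥ F (u i) (u m)) := by
      intro i m
      have h1 : Q m i = boundaryMatrix N i m - Q i m := by have := hB i m; linarith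
      have hps : ψ (u i) - ψ (u m) = v (u i) ⬝ᵥ F (u i) (u m) - v (u m) ⬝ᵥ F (u i) (u m) := by
        rw [← hEC (u i) (u m), sub_dotProduct]
      rw [h1, hps]; ring
    calc 2 * ∑ i, ∑ m, Q i m * (v (u i) ⬝ᵥ F (u i) (u m))
        = ∑ i, ∑ m, Q i m * (v (u i) ⬝ᵥ F (u i) (u m))
            + ∑ i, ∑ m, Q m i * (v (u m) ⬝ᵥ F (u i) (u m)) := by rw [← h2]; ring
      _ = ∑ i, ∑ m, (Q i m * (v (u i) ⬝ᵥ F (u i) (u m))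
            + Q m i * (v (u m) ⬝ᵥ F (u i) (u m))) := by
          rw [← Finset.sum_add_distrib]
          exact Finset.sum_congr rfl fun i _ => (Finset.sum_add_distrib).symm
      _ = _ := Finset.sum_congr rfl fun i _ => Finset.sum_congr rfl fun m _ => hterm i m
  rw [hsymm]
  have hsplit : ∑ i, ∑ m, (Q i m * (ψ (u i) - ψ (u m))
        + boundaryMatrix N i m * (v (u m) ⬝ᵥ F (u i) (u m)))
      = (∑ i, ∑ m, Q i m * (ψ (u i) - ψ (u m)))
        + ∑ i, ∑ m, boundaryMatrix N i m * (v (u m) ⬝ᵥ F (u i) (u m)) := by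
    rw [← Finset.sum_add_distrib]
    exact Finset.sum_congr rfl fun i _ => Finset.sum_add_distrib
  rw [hsplit]
  have hpart1 : ∑ i, ∑ m, Q i m * (ψ (u i) - ψ (u m))
      = - (ψ (u (Fin.last N)) - ψ (u 0)) := by
    have hrow : ∀ i, ∑ m, Q i m * (ψ (u i) - ψ (u m)) = - ∑ m, Q i m * ψ (u m) := by
      intro i
      have : ∑ m, Q i m * (ψ (u i) - ψ (u m))
          = (∑ m, Q i m) * ψ (u i) - ∑ m, Q i m * ψ (u m) := by
        rw [Finset.sum_mul, ← Finset.sum_sub_distrib]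
        exact Finset.sum_congr rfl fun m _ => by ring
      rw [this, hQrow i]; ring
    calc ∑ i, ∑ m, Q i m * (ψ (u i) - ψ (u m))
        = ∑ i, (- ∑ m, Q i m * ψ (u m)) := Finset.sum_congr rfl fun i _ => hrow i
      _ = - ∑ i, ∑ m, Q i m * ψ (u m) := Finset.sum_neg_distrib _
      _ = - ∑ m, ∑ i, Q i m * ψ (u m) := by rw [Finset.sum_comm]
      _ = - ∑ m, (∑ i, Q i m) * ψ (u m) := by
          congr 1; exact Finset.sum_congr rfl fun m _ => (Finset.sum_mul _ _ _).symm
      _ = - ∑ m, ((if m = Fin.last N then (1:ℝ) else 0)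
            + (if m = 0 then (-1:ℝ) else 0)) * ψ (u m) := by
          congr 1; exact Finset.sum_congr rfl fun m _ => by rw [hQcol m]
      _ = - (ψ (u (Fin.last N)) - ψ (u 0)) := by
          simp [add_mul, Finset.sum_add_distrib, ite_mul, Finset.sum_ite_eq']
          ring
  have hpart2 : ∑ i, ∑ m, boundaryMatrix N i m * (v (u m) ⬝ᵥ F (u i) (u m))
      = (v (u (Fin.last N)) ⬝ᵥ f (u (Fin.last N))) - (v (u 0) ⬝ᵥ f (u 0)) := by
    have hin : ∀ i : Fin (N+1), ∑ m, boundaryMatrix N i m * (v (u m) ⬝ᵥ F (u i) (u m))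
        = ((if i = Fin.last N then (1:ℝ) else 0) + (if i = 0 then (-1:ℝ) else 0))
            * (v (u i) ⬝ᵥ f (u i)) := by
      intro i
      rw [← hcons (u i)]
      simp [boundaryMatrix, Matrix.diagonal_apply, ite_mul, Finset.sum_ite_eq']
    calc ∑ i, ∑ m, boundaryMatrix N i m * (v (u m) ⬝ᵥ F (u i) (u m))
        = ∑ i, ((if i = Fin.last N then (1:ℝ) else 0) + (if i = 0 then (-1:ℝ) else 0))
            * (v (u i) ⬝ᵥ f (u i)) := Finset.sum_congr rfl fun i _ => hin i
      _ = _ := by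
          simp [add_mul, Finset.sum_add_distrib, ite_mul, Finset.sum_ite_eq']
          ring
  rw [hpart1, hpart2]; ring

lemma line_sum {N M : ℕ} (Q : Matrix (Fin (N+1)) (Fin (N+1)) ℝ)
    (hSBP : Q + Q.transpose = boundaryMatrix N)
    (hQrow : ∀ i, ∑ m, Q i m = 0)
    (F : (Fin M → ℝ) → (Fin M → ℝ) → (Fin M → ℝ))
    (f : (Fin M → ℝ) → (Fin M → ℝ))
    (hsym : ∀ a b, F a b = F b a) (hcons : ∀ a, F a a = f a)
    (v : (Fin M → ℝ) → (Fin M → ℝ)) (ψ : (Fin M → ℝ) → ℝ)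
    (hEC : ∀ a b, (v a - v b) ⬝ᵥ F a b = ψ a - ψ b)
    (u : Fin (N+1) → (Fin M → ℝ)) (Fp Fm : Fin M → ℝ) :
    ∑ i, v (u i) ⬝ᵥ ((2:ℝ) • (∑ m, Q i m • F (u i) (u m))
        + (if i = Fin.last N then (1:ℝ) else 0) • (Fp - f (u (Fin.last N)))
        - (if i = 0 then (1:ℝ) else 0) • (Fm - f (u 0)))
      = (v (u (Fin.last N)) ⬝ᵥ Fp - ψ (u (Fin.last N)))
        - (v (u 0) ⬝ᵥ Fm - ψ (u 0)) := by
  have hterm : ∀ i : Fin (N+1), v (u i) ⬝ᵥ ((2:ℝ) • (∑ m, Q i m • F (u i) (u m))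
        + (if i = Fin.last N then (1:ℝ) else 0) • (Fp - f (u (Fin.last N)))
        - (if i = 0 then (1:ℝ) else 0) • (Fm - f (u 0)))
      = 2 * (∑ m, Q i m * (v (u i) ⬝ᵥ F (u i) (u m)))
        + (if i = Fin.last N then (1:ℝ) else 0) * (v (u i) ⬝ᵥ (Fp - f (u (Fin.last N))))
        - (if i = 0 then (1:ℝ) else 0) * (v (u i) ⬝ᵥ (Fm - f (u 0))) := by
    intro i
    simp only [dotProduct_sub, dotProduct_add, dotProduct_smul, smul_eq_mul,
      dotProduct_finset_sum]
  rw [Finset.sum_congr rfl fun i _ => hterm i]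
  have h1 : ∑ i, (2 * (∑ m, Q i m * (v (u i) ⬝ᵥ F (u i) (u m)))
        + (if i = Fin.last N then (1:ℝ) else 0) * (v (u i) ⬝ᵥ (Fp - f (u (Fin.last N))))
        - (if i = 0 then (1:ℝ) else 0) * (v (u i) ⬝ᵥ (Fm - f (u 0))))
      = 2 * (∑ i, ∑ m, Q i m * (v (u i) ⬝ᵥ F (u i) (u m)))
        + (v (u (Fin.last N)) ⬝ᵥ (Fp - f (u (Fin.last N))))
        - (v (u 0) ⬝ᵥ (Fm - f (u 0))) := by
    rw [Finset.sum_sub_distrib, Finset.sum_add_distrib, ← Finset.mul_sum]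
    congr 1
    · congr 1
      simp [ite_mul, Finset.sum_ite_eq']
    · simp [ite_mul, Finset.sum_ite_eq']
  rw [h1, volume_sum Q hSBP hQrow F f hsym hcons v ψ hEC u,
    dotProduct_sub, dotProduct_sub]
  ring

/-- Lemma 1 of the paper, entropy part: contracting the split-form DGSEM with
the entropy variables, the total entropy growth reduces to surface terms. -/
theorem splitform_dgsem_entropy_growth
    (N M : ℕ) (hM : 1 ≤ M)
    (ω : Fin (N + 1) → ℝ) (J : ℝ)
    (Q : Matrix (Fin (N + 1)) (Fin (N + 1)) ℝ)
    (hSBP : Q + Q.transpose = boundaryMatrix N)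
    (hconsistent : Q.mulVec (fun _ => 1) = 0)
    (Ftil Gtil : (Fin M → ℝ) → (Fin M → ℝ) → (Fin M → ℝ))
    (ftil gtil : (Fin M → ℝ) → (Fin M → ℝ))
    (hFsym : ∀ a b, Ftil a b = Ftil b a)
    (hGsym : ∀ a b, Gtil a b = Gtil b a)
    (hFcons : ∀ a, Ftil a a = ftil a)
    (hGcons : ∀ a, Gtil a a = gtil a)
    (v : (Fin M → ℝ) → (Fin M → ℝ))
    (ψf ψg : (Fin M → ℝ) → ℝ)
    (hFEC : ∀ a b, (v a - v b) ⬝ᵥ Ftil a b = ψf a - ψf b)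
    (hGEC : ∀ a b, (v a - v b) ⬝ᵥ Gtil a b = ψg a - ψg b)
    (U Ut : Fin (N + 1) → Fin (N + 1) → (Fin M → ℝ))
    (Fsp Fsm Gsp Gsm : Fin (N + 1) → (Fin M → ℝ))
    (hscheme : ∀ i j,
      (J * ω i * ω j) • Ut i j =
        -(ω j • ((2 : ℝ) • (∑ m, Q i m • Ftil (U i j) (U m j))
            + (if i = Fin.last N then (1 : ℝ) else 0) •
                (Fsp j - ftil (U (Fin.last N) j))
            - (if i = 0 then (1 : ℝ) else 0) • (Fsm j - ftil (U 0 j))))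
        - ω i • ((2 : ℝ) • (∑ m, Q j m • Gtil (U i j) (U i m))
            + (if j = Fin.last N then (1 : ℝ) else 0) •
                (Gsp i - gtil (U i (Fin.last N)))
            - (if j = 0 then (1 : ℝ) else 0) • (Gsm i - gtil (U i 0)))) :
    J * ∑ i, ∑ j, ω i * ω j * (v (U i j) ⬝ᵥ Ut i j)
      = -(∑ j, ω j * ((v (U (Fin.last N) j) ⬝ᵥ Fsp j - ψf (U (Fin.last N) j))
            - (v (U 0 j) ⬝ᵥ Fsm j - ψf (U 0 j))))
        - ∑ i, ω i * ((v (U i (Fin.last N)) ⬝ᵥ Gsp i - ψg (U i (Fin.last N)))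
            - (v (U i 0) ⬝ᵥ Gsm i - ψg (U i 0))) := by
  have hQrow : ∀ i, ∑ m, Q i m = 0 := by
    intro i
    have := congrFun hconsistent i
    simpa [Matrix.mulVec, dotProduct] using this
  have key1 : ∀ j, ∑ i, v (U i j) ⬝ᵥ ((2:ℝ) • (∑ m, Q i m • Ftil (U i j) (U m j))
        + (if i = Fin.last N then (1:ℝ) else 0) • (Fsp j - ftil (U (Fin.last N) j))
        - (if i = 0 then (1:ℝ) else 0) • (Fsm j - ftil (U 0 j)))
      = (v (U (Fin.last N) j) ⬝ᵥ Fsp j - ψf (U (Fin.last N) j))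
        - (v (U 0 j) ⬝ᵥ Fsm j - ψf (U 0 j)) := fun j =>
    line_sum Q hSBP hQrow Ftil ftil hFsym hFcons v ψf hFEC (fun i => U i j) (Fsp j) (Fsm j)
  have key2 : ∀ i, ∑ j, v (U i j) ⬝ᵥ ((2:ℝ) • (∑ m, Q j m • Gtil (U i j) (U i m))
        + (if j = Fin.last N then (1:ℝ) else 0) • (Gsp i - gtil (U i (Fin.last N)))
        - (if j = 0 then (1:ℝ) else 0) • (Gsm i - gtil (U i 0)))
      = (v (U i (Fin.last N)) ⬝ᵥ Gsp i - ψg (U i (Fin.last N)))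
        - (v (U i 0) ⬝ᵥ Gsm i - ψg (U i 0)) := fun i =>
    line_sum Q hSBP hQrow Gtil gtil hGsym hGcons v ψg hGEC (fun j => U i j) (Gsp i) (Gsm i)
  have hterm : ∀ i j, ω i * ω j * (v (U i j) ⬝ᵥ Ut i j) * J
      = -(ω j * (v (U i j) ⬝ᵥ ((2:ℝ) • (∑ m, Q i m • Ftil (U i j) (U m j))
            + (if i = Fin.last N then (1:ℝ) else 0) • (Fsp j - ftil (U (Fin.last N) j))
            - (if i = 0 then (1:ℝ) else 0) • (Fsm j - ftil (U 0 j)))))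
        - ω i * (v (U i j) ⬝ᵥ ((2:ℝ) • (∑ m, Q j m • Gtil (U i j) (U i m))
            + (if j = Fin.last N then (1:ℝ) else 0) • (Gsp i - gtil (U i (Fin.last N)))
            - (if j = 0 then (1:ℝ) else 0) • (Gsm i - gtil (U i 0)))) := by
    intro i j
    have h0 : ω i * ω j * (v (U i j) ⬝ᵥ Ut i j) * J
        = v (U i j) ⬝ᵥ ((J * ω i * ω j) • Ut i j) := by
      rw [dotProduct_smul, smul_eq_mul]; ring
    rw [h0, hscheme i j, dotProduct_sub, dotProduct_neg, dotProduct_smul, dotProduct_smul,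
      smul_eq_mul, smul_eq_mul]
  calc J * ∑ i, ∑ j, ω i * ω j * (v (U i j) ⬝ᵥ Ut i j)
      = ∑ i, ∑ j, ω i * ω j * (v (U i j) ⬝ᵥ Ut i j) * J := by
        rw [mul_comm, Finset.sum_mul]
        exact Finset.sum_congr rfl fun i _ => Finset.sum_mul _ _ _
    _ = ∑ i, ∑ j, (-(ω j * (v (U i j) ⬝ᵥ ((2:ℝ) • (∑ m, Q i m • Ftil (U i j) (U m j))
            + (if i = Fin.last N then (1:ℝ) else 0) • (Fsp j - ftil (U (Fin.last N) j))
            - (if i = 0 then (1:ℝ) else 0) • (Fsm j - ftil (U 0 j)))))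
          - ω i * (v (U i j) ⬝ᵥ ((2:ℝ) • (∑ m, Q j m • Gtil (U i j) (U i m))
            + (if j = Fin.last N then (1:ℝ) else 0) • (Gsp i - gtil (U i (Fin.last N)))
            - (if j = 0 then (1:ℝ) else 0) • (Gsm i - gtil (U i 0))))) :=
        Finset.sum_congr rfl fun i _ => Finset.sum_congr rfl fun j _ => hterm i j
    _ = -(∑ i, ∑ j, ω j * (v (U i j) ⬝ᵥ ((2:ℝ) • (∑ m, Q i m • Ftil (U i j) (U m j))
            + (if i = Fin.last N then (1:ℝ) else 0) • (Fsp j - ftil (U (Fin.last N) j))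
            - (if i = 0 then (1:ℝ) else 0) • (Fsm j - ftil (U 0 j)))))
          - ∑ i, ∑ j, ω i * (v (U i j) ⬝ᵥ ((2:ℝ) • (∑ m, Q j m • Gtil (U i j) (U i m))
            + (if j = Fin.last N then (1:ℝ) else 0) • (Gsp i - gtil (U i (Fin.last N)))
            - (if j = 0 then (1:ℝ) else 0) • (Gsm i - gtil (U i 0)))) := by
        rw [← Finset.sum_neg_distrib, ← Finset.sum_sub_distrib]
        exact Finset.sum_congr rfl fun i _ => by
          rw [← Finset.sum_neg_distrib, ← Finset.sum_sub_distrib]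
    _ = -(∑ j, ω j * ((v (U (Fin.last N) j) ⬝ᵥ Fsp j - ψf (U (Fin.last N) j))
            - (v (U 0 j) ⬝ᵥ Fsm j - ψf (U 0 j))))
        - ∑ i, ω i * ((v (U i (Fin.last N)) ⬝ᵥ Gsp i - ψg (U i (Fin.last N)))
            - (v (U i 0) ⬝ᵥ Gsm i - ψg (U i 0))) := by
        congr 1
        · congr 1
          rw [Finset.sum_comm]
          exact Finset.sum_congr rfl fun j _ => by
            rw [← Finset.mul_sum, key1 j]
        · exact Finset.sum_congr rfl fun i _ => by
            rw [← Finset.mul_sum, key2 i]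
end
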